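/- Let G be a simple graph on vertices {v_1,…,v_n} and let G* be the cone over G, obtained by adding a new vertex v_0 together with an edge from v_0 to each v_i (so G* is connected). Then for every field K there is a bijection between the set {x ∈ K^{E(G*)} : Q_{G*}(x) ≠ 0} and the set Z^o_G(K). -/

import Mathlib

attribute [local instance] Classical.propDecidable

/-- The polynomial `Q_H = Σ_T ∏_{e ∈ T} x_e`, where `T` ranges over all spanning trees
of `H`, with one variable for each edge of `H`. -/
noncomputable def QG {V : Type} [Fintype V] [DecidableEq V] (H : SimpleGraph V) :
    MvPolynomial H.edgeSet ℤ :=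
  ∑ T ∈ Finset.univ.filter (fun T : SimpleGraph V => T ≤ H ∧ T.IsTree),
    ∏ e ∈ Finset.univ.filter (fun e : H.edgeSet => (e : Sym2 V) ∈ T.edgeSet),
      MvPolynomial.X e

/-- The cone `G*` over `G`: a new apex vertex (`none`) is joined by an edge to every
vertex of `G`, and two old vertices are adjacent iff they are adjacent in `G`. -/
def cone {n : ℕ} (G : SimpleGraph (Fin n)) : SimpleGraph (Option (Fin n)) :=
  SimpleGraph.fromRel (fun x y =>
    x = none ∨ ∃ i j : Fin n, x = some i ∧ y = some j ∧ G.Adj i j)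

/-- `Z^o_G(K)`: the set of invertible symmetric `n × n` matrices `M` over `K` such that
`M i j = 0` whenever `i ≠ j` and `{v_i, v_j}` is not an edge of `G`. -/
def ZoG {n : ℕ} (G : SimpleGraph (Fin n)) (K : Type) [Field K] :
    Set (Matrix (Fin n) (Fin n) K) :=
  {M | M.det ≠ 0 ∧ M.IsSymm ∧ ∀ i j : Fin n, i ≠ j → ¬ G.Adj i j → M i j = 0}

open Finset in
/-- Signed incidence function: `incf e x` is `±1` if `x` is an endpoint of `e`
(sign determined by a fixed linear order), and `0` otherwise. -/
noncomputable def incf {n : ℕ} : Sym2 (Option (Fin n)) → Option (Fin n) → ℤ :=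
  Sym2.lift ⟨fun a b x =>
    (if (finSuccEquiv n).symm x = max ((finSuccEquiv n).symm a) ((finSuccEquiv n).symm b)
      then 1 else 0)
    - (if (finSuccEquiv n).symm x = min ((finSuccEquiv n).symm a) ((finSuccEquiv n).symm b)
      then 1 else 0),
    by intro a b; funext x; simp [max_comm, min_comm]⟩

lemma incf_mul {n : ℕ} {u v : Option (Fin n)} (huv : u ≠ v) (a : Option (Fin n)) :
    incf s(u, v) v * incf s(u, v) a
      = (if a = v then 1 else 0) - (if a = u then 1 else 0) := by
  have hinj : Function.Injective ((finSuccEquiv n).symm) := Equiv.injective _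
  have hne : (finSuccEquiv n).symm u ≠ (finSuccEquiv n).symm v := fun h => huv (hinj h)
  have key : ∀ x : Option (Fin n),
      ((finSuccEquiv n).symm x = (finSuccEquiv n).symm u ↔ x = u)
      ∧ ((finSuccEquiv n).symm x = (finSuccEquiv n).symm v ↔ x = v) :=
    fun x => ⟨⟨fun h => hinj h, fun h => by rw [h]⟩, ⟨fun h => hinj h, fun h => by rw [h]⟩⟩
  rcases le_total ((finSuccEquiv n).symm u) ((finSuccEquiv n).symm v) with h | h
  · simp only [incf, Sym2.lift_mk, max_eq_right h, min_eq_left h, (key _).1, (key _).2,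
      if_pos rfl, if_neg (Ne.symm huv)]
    ring_nf
    simp [(key a).1, (key a).2]
  · simp only [incf, Sym2.lift_mk, max_eq_left h, min_eq_right h, (key _).1, (key _).2,
      if_pos rfl, if_neg (Ne.symm huv)]
    ring_nf
    simp [(key a).1, (key a).2]

lemma incf_eq_zero_of_not_mem {n : ℕ} {e : Sym2 (Option (Fin n))} {x : Option (Fin n)}
    (hx : x ∉ e) : incf e x = 0 := by
  induction e using Sym2.ind with
  | _ u v =>
    rw [Sym2.mem_iff] at hx
    push_neg at hx
    have hinj : Function.Injective ((finSuccEquiv n).symm) := Equiv.injective _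
    have h1 : (finSuccEquiv n).symm x ≠ (finSuccEquiv n).symm u := fun h => hx.1 (hinj h)
    have h2 : (finSuccEquiv n).symm x ≠ (finSuccEquiv n).symm v := fun h => hx.2 (hinj h)
    rcases le_total ((finSuccEquiv n).symm u) ((finSuccEquiv n).symm v) with h | h
    · simp [incf, Sym2.lift_mk, max_eq_right h, min_eq_left h, h1, h2]
    · simp [incf, Sym2.lift_mk, max_eq_left h, min_eq_right h, h1, h2]

lemma incf_sum_zero {n : ℕ} (e : Sym2 (Option (Fin n))) :
    ∑ a : Option (Fin n), incf e a = 0 := by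
  induction e using Sym2.ind with
  | _ u v =>
    simp only [incf, Sym2.lift_mk]
    rw [Finset.sum_sub_distrib]
    have : ∀ c : Fin (n + 1),
        (∑ a : Option (Fin n), if (finSuccEquiv n).symm a = c then (1:ℤ) else 0) = 1 := by
      intro c
      rw [← Equiv.sum_comp (finSuccEquiv n) (fun b => if (finSuccEquiv n).symm b = c then (1:ℤ) else 0)]
      simp
    rw [this, this, sub_self]


lemma cone_adj_none {n : ℕ} (G : SimpleGraph (Fin n)) (i : Fin n) :
    (cone G).Adj none (some i) := by
  simp [cone, SimpleGraph.fromRel_adj]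

lemma cone_adj_some {n : ℕ} (G : SimpleGraph (Fin n)) (i j : Fin n) :
    (cone G).Adj (some i) (some j) ↔ G.Adj i j := by
  constructor
  · rintro ⟨hne, h | h⟩
    · rcases h with h | ⟨i', j', hi, hj, h⟩
      · exact absurd h (by simp)
      · cases hi; cases hj; exact h
    · rcases h with h | ⟨i', j', hi, hj, h⟩
      · exact absurd h (by simp)
      · cases hi; cases hj; exact h.symm
  · intro h
    exact ⟨by simpa using h.ne, Or.inl (Or.inr ⟨i, j, rfl, rfl, h⟩)⟩


section
variable {n : ℕ} (G : SimpleGraph (Fin n)) (K : Type) [Field K]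

/-- The matrix `NᵀWN` associated to a weight function on the edges of the cone. -/
noncomputable def phiM (x : (cone G).edgeSet → K) : Matrix (Fin n) (Fin n) K :=
  fun i j => ∑ e : (cone G).edgeSet,
    x e * (incf e.val (some i) : K) * (incf e.val (some j) : K)

variable {G K}

lemma term_zero {a b : Option (Fin n)} (e : (cone G).edgeSet)
    (hne : e.val ≠ s(a, b)) (hab : a ≠ b) :
    (incf e.val a : K) * (incf e.val b : K) = 0 := by
  by_cases ha : a ∈ e.val
  · by_cases hb : b ∈ e.val
    · exact absurd ((Sym2.mem_and_mem_iff hab).mp ⟨ha, hb⟩) hne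
    · rw [incf_eq_zero_of_not_mem hb]; push_cast; ring
  · rw [incf_eq_zero_of_not_mem ha]; push_cast; ring

lemma incf_pair {a b : Option (Fin n)} (hab : a ≠ b) :
    (incf s(a, b) a : K) * (incf s(a, b) b : K) = -1 := by
  have := incf_mul (u := b) (v := a) (Ne.symm hab) b
  rw [Sym2.eq_swap (a := b) (b := a)] at this
  rw [if_neg (Ne.symm hab), if_pos rfl] at this
  rw [← Int.cast_mul, this]
  norm_num

lemma phiM_offdiag_adj (x : (cone G).edgeSet → K) {i j : Fin n} (hadj : G.Adj i j) :
    phiM G K x i j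
      = -x ⟨s(some i, some j), (SimpleGraph.mem_edgeSet _).mpr ((cone_adj_some G i j).mpr hadj)⟩ := by
  set e₀ : (cone G).edgeSet :=
    ⟨s(some i, some j), (SimpleGraph.mem_edgeSet _).mpr ((cone_adj_some G i j).mpr hadj)⟩
  have hij : (some i : Option (Fin n)) ≠ some j := by simpa using hadj.ne
  rw [phiM, Finset.sum_eq_single e₀]
  · rw [mul_assoc, incf_pair hij]; ring
  · intro e _ hne
    rw [mul_assoc, term_zero e (fun h => hne (Subtype.ext h)) hij, mul_zero]
  · intro h; exact absurd (Finset.mem_univ _) h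

lemma phiM_offdiag_nonadj (x : (cone G).edgeSet → K) {i j : Fin n} (hij : i ≠ j)
    (hadj : ¬G.Adj i j) : phiM G K x i j = 0 := by
  rw [phiM]
  apply Finset.sum_eq_zero
  intro e _
  have hij' : (some i : Option (Fin n)) ≠ some j := by simpa using hij
  rw [mul_assoc, term_zero e ?_ hij', mul_zero]
  intro h
  exact hadj ((cone_adj_some G i j).mp ((SimpleGraph.mem_edgeSet _).mp (h ▸ e.2)))

lemma phiM_rowsum (x : (cone G).edgeSet → K) (i : Fin n) :
    ∑ j, phiM G K x i j
      = x ⟨s(none, some i), (SimpleGraph.mem_edgeSet _).mpr (cone_adj_none G i)⟩ := by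
  set e₀ : (cone G).edgeSet :=
    ⟨s(none, some i), (SimpleGraph.mem_edgeSet _).mpr (cone_adj_none G i)⟩
  have hni : (none : Option (Fin n)) ≠ some i := by simp
  have hin : (some i : Option (Fin n)) ≠ none := by simp
  simp only [phiM]
  rw [Finset.sum_comm]
  have hsum : ∀ e : (cone G).edgeSet,
      ∑ j : Fin n, (incf e.val (some j) : K) = -(incf e.val none : K) := by
    intro e
    have h0 := incf_sum_zero e.val
    rw [univ_option, Finset.sum_insertNone] at h0
    have h1 : (incf e.val none : ℤ) + ∑ j : Fin n, incf e.val (some j) = 0 := h0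
    have h2 : (∑ j : Fin n, incf e.val (some j) : ℤ) = -(incf e.val none) := by linarith
    calc ∑ j : Fin n, (incf e.val (some j) : K)
        = ((∑ j : Fin n, incf e.val (some j) : ℤ) : K) := by push_cast; rfl
      _ = -(incf e.val none : K) := by rw [h2]; push_cast; rfl
  calc ∑ e : (cone G).edgeSet, ∑ j : Fin n,
        x e * (incf e.val (some i) : K) * (incf e.val (some j) : K)
      = ∑ e : (cone G).edgeSet,
        x e * ((incf e.val (some i) : K) * -(incf e.val none : K)) := by
        apply Finset.sum_congr rfl
        intro e _
        rw [← hsum e, Finset.mul_sum, Finset.mul_sum]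
        apply Finset.sum_congr rfl
        intro j _
        ring
    _ = x e₀ := by
        rw [Finset.sum_eq_single e₀]
        · have h2 : (incf e₀.val (some i) : K) * (incf e₀.val none : K) = -1 := by
            have h3 := incf_pair (K := K) (a := (some i : Option (Fin n))) (b := none) hin
            rwa [Sym2.eq_swap (a := (some i : Option (Fin n))) (b := none)] at h3
          calc x e₀ * ((incf e₀.val (some i) : K) * -(incf e₀.val none : K))
              = x e₀ * -((incf e₀.val (some i) : K) * (incf e₀.val none : K)) := by ring
            _ = x e₀ := by rw [h2]; ring
        · intro e _ hne
          have h2 : (incf e.val (some i) : K) * (incf e.val none : K) = 0 := by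
            apply term_zero e _ hin
            intro h
            apply hne
            apply Subtype.ext
            rw [h, Sym2.eq_swap]
          calc x e * ((incf e.val (some i) : K) * -(incf e.val none : K))
              = x e * -((incf e.val (some i) : K) * (incf e.val none : K)) := by ring
            _ = 0 := by rw [h2]; ring
        · intro h; exact absurd (Finset.mem_univ _) h

end


section
variable {n : ℕ} {G : SimpleGraph (Fin n)}

/-- The simple graph spanned by a finite set of edges of the cone. -/
noncomputable def HS (S : Finset (cone G).edgeSet) : SimpleGraph (Option (Fin n)) :=
  SimpleGraph.fromEdgeSet (↑(S.image Subtype.val))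

lemma HS_adj {S : Finset (cone G).edgeSet} {u v : Option (Fin n)} (h : (HS S).Adj u v) :
    s(u, v) ∈ S.image Subtype.val ∧ u ≠ v := by
  rw [HS, SimpleGraph.fromEdgeSet_adj] at h
  exact ⟨by exact_mod_cast h.1, h.2⟩

/-- The key telescoping computation along a walk. -/
lemma key_sum {K : Type*} [CommRing K] {S : Finset (cone G).edgeSet} (eS : Fin n ≃ S)
    {u v : Option (Fin n)} (p : (HS S).Walk u v) (a : Option (Fin n)) :
    ∑ k : Fin n,
      ((p.darts.map fun d =>
          if ((eS k : (cone G).edgeSet) : Sym2 (Option (Fin n))) = d.edge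
          then (incf d.edge d.snd : K) else 0).sum)
        * (incf ((eS k : (cone G).edgeSet) : Sym2 (Option (Fin n))) a : K)
    = (if a = v then 1 else 0) - (if a = u then 1 else 0) := by
  induction p with
  | nil => simp
  | @cons u u' v h q ih =>
    rw [SimpleGraph.Walk.darts_cons]
    simp only [List.map_cons, List.sum_cons, add_mul]
    rw [Finset.sum_add_distrib, ih]
    have hedge : s(u, u') ∈ S.image Subtype.val := (HS_adj h).1
    have huu' : u ≠ u' := (HS_adj h).2
    obtain ⟨e', he'S, he'⟩ := Finset.mem_image.mp hedge
    set d0 : (HS S).Dart := SimpleGraph.Dart.mk (u, u') h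
    have hd0 : d0.edge = s(u, u') := rfl
    set k₀ : Fin n := eS.symm ⟨e', he'S⟩
    have hk₀ : ((eS k₀ : (cone G).edgeSet) : Sym2 (Option (Fin n))) = s(u, u') := by
      simp only [k₀, Equiv.apply_symm_apply]; exact he'
    have hmain : ∑ k : Fin n,
        (if ((eS k : (cone G).edgeSet) : Sym2 (Option (Fin n))) = d0.edge
          then (incf d0.edge d0.snd : K) else 0)
          * (incf ((eS k : (cone G).edgeSet) : Sym2 (Option (Fin n))) a : K)
        = (if a = u' then 1 else 0) - (if a = u then 1 else 0) := by
      rw [Finset.sum_eq_single k₀]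
      · rw [if_pos (by rw [hk₀, hd0]), hk₀, hd0]
        have : incf s(u, u') u' * incf s(u, u') a
            = (if a = u' then 1 else 0) - (if a = u then 1 else 0) := incf_mul huu' a
        have hcast : ((incf s(u, u') u' * incf s(u, u') a : ℤ) : K)
            = ((if a = u' then (1:ℤ) else 0) - (if a = u then 1 else 0) : ℤ) := by
          rw [this]
        push_cast at hcast
        convert hcast using 2 <;> simp [apply_ite (fun z : ℤ => (z : K))]
      · intro k _ hk
        rw [if_neg, zero_mul]
        intro hEq
        apply hk
        have : (eS k : (cone G).edgeSet) = (eS k₀ : (cone G).edgeSet) := by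
          apply Subtype.ext
          rw [hEq, hd0, ← hk₀]
        exact eS.injective (Subtype.ext this)
      · intro h'; exact absurd (Finset.mem_univ _) h'
    rw [hmain]
    ring

/-- Every edge of the cone has two distinct endpoints. -/
lemma edge_rep (e : (cone G).edgeSet) :
    ∃ u v : Option (Fin n), u ≠ v ∧ (e : Sym2 (Option (Fin n))) = s(u, v) := by
  obtain ⟨e', he⟩ := e
  induction e' using Sym2.ind with
  | _ u v =>
    refine ⟨u, v, ?_, rfl⟩
    intro h
    exact (cone G).not_isDiag_of_mem_edgeSet he (by rw [h]; exact Sym2.mk_isDiag_iff.mpr rfl)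

lemma incf_self_sq {u v : Option (Fin n)} (huv : u ≠ v) :
    incf s(u, v) v * incf s(u, v) v = 1 := by
  have h := incf_mul huv v
  rwa [if_pos rfl, if_neg (Ne.symm huv), sub_zero] at h

lemma incf_opp {u v : Option (Fin n)} (huv : u ≠ v) :
    incf s(u, v) u = -incf s(u, v) v := by
  have h2 := incf_mul huv u
  rw [if_neg huv, if_pos rfl, zero_sub] at h2
  rcases mul_self_eq_one_iff.mp (incf_self_sq huv) with h1 | h1 <;> rw [h1] at h2 ⊢ <;> linarith

lemma incf_cast_ne_zero {K : Type} [Field K] {u v : Option (Fin n)} (huv : u ≠ v) :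
    (incf s(u, v) v : K) ≠ 0 := by
  intro h0
  have := incf_self_sq huv
  have hc : ((incf s(u, v) v * incf s(u, v) v : ℤ) : K) = 1 := by rw [this]; norm_num
  push_cast at hc
  rw [h0, mul_zero] at hc
  exact zero_ne_one hc

lemma inc_dot {K : Type} [Field K] {u v : Option (Fin n)} (huv : u ≠ v)
    (f : Option (Fin n) → K) :
    ∑ a : Option (Fin n), (incf s(u, v) a : K) * f a
      = (incf s(u, v) v : K) * (f v - f u) := by
  have hzero : ∀ x ∈ Finset.univ, x ∉ ({u, v} : Finset (Option (Fin n))) →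
      (incf s(u, v) x : K) * f x = 0 := by
    intro x _ hx
    rw [Finset.mem_insert, Finset.mem_singleton] at hx
    push_neg at hx
    rw [incf_eq_zero_of_not_mem (by rw [Sym2.mem_iff]; push_neg; exact hx)]
    push_cast; ring
  rw [← Finset.sum_subset (Finset.subset_univ ({u, v} : Finset (Option (Fin n)))) hzero,
    Finset.sum_pair huv]
  have : (incf s(u, v) u : K) = -(incf s(u, v) v : K) := by
    rw [incf_opp huv]; push_cast; ring
  rw [this]; ring

/-- If the edges of `S` span a tree, the reduced incidence matrix has determinant `±1`. -/
lemma tree_det_sq (S : Finset (cone G).edgeSet) (eS : Fin n ≃ S) (hT : (HS S).IsTree) :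
    (Matrix.det (Matrix.of fun k j : Fin n =>
      incf ((eS k : (cone G).edgeSet) : Sym2 (Option (Fin n))) (some j))) ^ 2 = 1 := by
  classical
  set D : Matrix (Fin n) (Fin n) ℤ := Matrix.of fun k j : Fin n =>
      incf ((eS k : (cone G).edgeSet) : Sym2 (Option (Fin n))) (some j) with hD
  have hreach : ∀ j : Fin n, (HS S).Reachable none (some j) :=
    fun j => hT.isConnected.preconnected none (some j)
  set w : (j : Fin n) → (HS S).Walk none (some j) := fun j => (hreach j).some
  set P : Matrix (Fin n) (Fin n) ℤ := Matrix.of fun j k : Fin n =>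
    ((w j).darts.map fun d =>
        if ((eS k : (cone G).edgeSet) : Sym2 (Option (Fin n))) = d.edge
        then (incf d.edge d.snd : ℤ) else 0).sum with hP
  have hPD : P * D = 1 := by
    ext j i
    rw [Matrix.mul_apply]
    have hks := key_sum (K := ℤ) eS (w j) (some i)
    simp only [Int.cast_id] at hks
    simp only [hP, hD, Matrix.of_apply]
    rw [hks]
    by_cases h : j = i
    · subst h; simp [Matrix.one_apply]
    · have h1 : ¬((some i : Option (Fin n)) = some j) := by simpa using Ne.symm h
      simp [Matrix.one_apply, h, Ne.symm h, h1]
  have hdet : P.det * D.det = 1 := by rw [← Matrix.det_mul, hPD, Matrix.det_one]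
  have hunit : IsUnit D.det := IsUnit.of_mul_eq_one (a := D.det) P.det (mul_comm P.det D.det ▸ hdet)
  rcases Int.isUnit_iff.mp hunit with h | h <;> rw [h] <;> norm_num

/-- If the edges of `S` do not span a tree, the reduced incidence
matrix is singular over any field. -/
lemma nontree_det (K : Type) [Field K] (S : Finset (cone G).edgeSet) (eS : Fin n ≃ S)
    (hT : ¬(HS S).IsTree) :
    Matrix.det (Matrix.of fun k j : Fin n =>
      (incf ((eS k : (cone G).edgeSet) : Sym2 (Option (Fin n))) (some j) : K)) = 0 := by
  classical
  set D : Matrix (Fin n) (Fin n) K := Matrix.of fun k j : Fin n =>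
      (incf ((eS k : (cone G).edgeSet) : Sym2 (Option (Fin n))) (some j) : K) with hD
  rw [SimpleGraph.isTree_iff] at hT
  push_neg at hT
  by_cases hconn : (HS S).Connected
  · -- there is a cycle; get a row dependency
    have hcyc : ¬(HS S).IsAcyclic := hT hconn
    rw [SimpleGraph.IsAcyclic] at hcyc
    push_neg at hcyc
    obtain ⟨z, c, hc⟩ := hcyc
    set uvec : Fin n → K := fun k =>
      (c.darts.map fun d =>
        if ((eS k : (cone G).edgeSet) : Sym2 (Option (Fin n))) = d.edge
        then (incf d.edge d.snd : K) else 0).sum with huvec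
    have hmul : Matrix.vecMul uvec D = 0 := by
      funext j
      rw [Matrix.vecMul, dotProduct]
      have hks := key_sum (K := K) eS c (some j)
      simp only [sub_self] at hks
      simpa only [huvec, hD, Matrix.of_apply, Pi.zero_apply] using hks
    have hne : uvec ≠ 0 := by
      cases c with
      | nil => exact absurd hc (SimpleGraph.Walk.IsCycle.not_of_nil)
      | @cons _ b _ h q =>
        have hd0e : s(z, b) ∈ S.image Subtype.val := (HS_adj h).1
        obtain ⟨e', he'S, he'⟩ := Finset.mem_image.mp hd0e
        set k₀ : Fin n := eS.symm ⟨e', he'S⟩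
        have hk₀ : ((eS k₀ : (cone G).edgeSet) : Sym2 (Option (Fin n))) = s(z, b) := by
          simp only [k₀, Equiv.apply_symm_apply]; exact he'
        intro h0
        have huk : ((SimpleGraph.Walk.cons h q).darts.map fun d =>
            if ((eS k₀ : (cone G).edgeSet) : Sym2 (Option (Fin n))) = d.edge
            then (incf d.edge d.snd : K) else 0).sum = 0 := congrFun h0 k₀
        rw [SimpleGraph.Walk.darts_cons, List.map_cons, List.sum_cons] at huk
        rw [show (SimpleGraph.Dart.mk (z, b) h).edge = s(z, b) from rfl] at huk
        rw [if_pos hk₀] at huk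
        have hfst : True := trivial
        have hrest : (q.darts.map fun d =>
            if ((eS k₀ : (cone G).edgeSet) : Sym2 (Option (Fin n))) = d.edge
            then (incf d.edge d.snd : K) else 0).sum = 0 := by
          apply List.sum_eq_zero
          intro r hr
          obtain ⟨d, hd, hdr⟩ := List.mem_map.mp hr
          by_cases hEq : ((eS k₀ : (cone G).edgeSet) : Sym2 (Option (Fin n))) = d.edge
          · exfalso
            have hnodup := hc.edges_nodup
            rw [SimpleGraph.Walk.edges_cons] at hnodup
            have hmem : d.edge ∈ q.edges := List.mem_map_of_mem hd
            rw [← hEq, hk₀] at hmem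
            exact (List.nodup_cons.mp hnodup).1 hmem
          · rw [← hdr, if_neg hEq]
        rw [hrest, add_zero] at huk
        exact incf_cast_ne_zero h.ne huk
    exact Matrix.exists_vecMul_eq_zero_iff.mp ⟨uvec, hne, hmul⟩
  · -- disconnected: get a column dependency
    have hpre : ¬(HS S).Preconnected := by
      intro hp
      exact hconn (SimpleGraph.connected_iff _ |>.mpr ⟨hp, ⟨none⟩⟩)
    rw [SimpleGraph.Preconnected] at hpre
    push_neg at hpre
    obtain ⟨a, b, hab⟩ := hpre
    have hex : ∃ j : Fin n, ¬(HS S).Reachable none (some j) := by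
      by_cases ha : (HS S).Reachable none a
      · by_cases hb : (HS S).Reachable none b
        · exact absurd (ha.symm.trans hb) hab
        · cases b with
          | none => exact absurd (SimpleGraph.Reachable.refl none) hb
          | some j => exact ⟨j, hb⟩
      · cases a with
        | none => exact absurd (SimpleGraph.Reachable.refl none) ha
        | some j => exact ⟨j, ha⟩
    obtain ⟨j₀, hj₀⟩ := hex
    set f : Option (Fin n) → K := fun v => if (HS S).Reachable none v then 0 else 1 with hf
    set vvec : Fin n → K := fun j => f (some j) with hv
    have hmul : Matrix.mulVec D vvec = 0 := by
      funext k
      rw [Matrix.mulVec, dotProduct]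
      obtain ⟨u, v, huv, he⟩ := edge_rep (eS k : (cone G).edgeSet)
      have hsum : ∑ j : Fin n, D k j * vvec j
          = ∑ x : Option (Fin n), (incf s(u, v) x : K) * f x := by
        rw [univ_option, Finset.sum_insertNone]
        have hnone : (incf s(u, v) none : K) * f none = 0 := by
          rw [hf]
          simp only [if_pos (SimpleGraph.Reachable.refl none)]
          ring
        rw [hnone, zero_add]
        apply Finset.sum_congr rfl
        intro j _
        simp only [hD, Matrix.of_apply, he, hv]
      rw [hsum, inc_dot huv]
      have hadj : (HS S).Adj u v := by
        rw [HS, SimpleGraph.fromEdgeSet_adj]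
        constructor
        · rw [← he]
          exact_mod_cast Finset.mem_image_of_mem Subtype.val (Finset.mem_coe.mp (by simp))
        · exact huv
      have : f v = f u := by
        by_cases hru : (HS S).Reachable none u
        · simp only [hf, if_pos hru, if_pos (hru.trans hadj.reachable)]
        · have h2 : ¬(HS S).Reachable none v := fun hrv => hru (hrv.trans hadj.symm.reachable)
          simp only [hf, if_neg hru, if_neg h2]
      rw [this, Pi.zero_apply]
      ring
    have hne : vvec ≠ 0 := by
      intro h0
      have := congrFun h0 j₀
      rw [hv, hf] at this
      simp only [if_neg hj₀] at this
      exact one_ne_zero this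
    exact Matrix.exists_mulVec_eq_zero_iff.mp ⟨vvec, hne, hmul⟩
end


open Finset in
lemma fiber_sum {α β M : Type*} [Fintype α] [Fintype β] [DecidableEq α] [DecidableEq β] [AddCommMonoid M]
    (S : Finset β) (eS : α ≃ S) (F : (α → β) → M) :
    ∑ g ∈ Finset.univ.filter
        (fun g : α → β => Finset.image g Finset.univ = S), F g
      = ∑ σ : Equiv.Perm α, F (fun i => (eS (σ i) : β)) := by
  classical
  have hcard : S.card = Fintype.card α := by
    rw [← Fintype.card_coe]; exact (Fintype.card_congr eS).symm
  have hmem : ∀ (g : α → β), Finset.image g Finset.univ = S → ∀ i, g i ∈ S := by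
    intro g himg i
    rw [← himg]; exact Finset.mem_image_of_mem g (Finset.mem_univ i)
  have hinj : ∀ (g : α → β), Finset.image g Finset.univ = S → Function.Injective g := by
    intro g himg
    have hinjOn : Set.InjOn g ↑(Finset.univ : Finset α) :=
      Finset.injOn_of_card_image_eq (by rw [himg, hcard, Finset.card_univ])
    exact fun a b h => hinjOn (by simp) (by simp) h
  have hbij : ∀ (g : α → β) (himg : Finset.image g Finset.univ = S),
      Function.Bijective (fun i => (⟨g i, hmem g himg i⟩ : S)) := by
    intro g himg
    rw [Fintype.bijective_iff_injective_and_card]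
    exact ⟨fun a b hab => hinj g himg (congrArg Subtype.val hab),
      by rw [Fintype.card_coe, hcard]⟩
  have h2 : ∀ (s : S) (h : (s : β) ∈ S), (⟨(s : β), h⟩ : S) = s := fun s h => Subtype.ext rfl
  refine Finset.sum_bij'
    (i := fun g hg => (Equiv.ofBijective _
        (hbij g (Finset.mem_filter.mp hg).2)).trans eS.symm)
    (j := fun σ _ => (fun i => ((eS (σ i) : S) : β)))
    ?hi ?hj ?left ?right ?val
  case hi => intro g hg; exact Finset.mem_univ _
  case hj =>
    intro σ _
    rw [Finset.mem_filter]
    refine ⟨Finset.mem_univ _, ?_⟩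
    ext e
    rw [Finset.mem_image]
    constructor
    · rintro ⟨i, _, rfl⟩; exact (eS (σ i)).2
    · intro he
      exact ⟨σ.symm (eS.symm ⟨e, he⟩), Finset.mem_univ _, by simp⟩
  case left =>
    intro g hg
    funext i
    simp only [Equiv.trans_apply, Equiv.ofBijective_apply, h2, Equiv.apply_symm_apply]
  case right =>
    intro σ _
    refine Equiv.ext fun i => ?_
    simp only [Equiv.trans_apply, Equiv.ofBijective_apply, h2, Equiv.symm_apply_apply]
  case val =>
    intro g hg
    congr 1
    funext i
    simp only [Equiv.trans_apply, Equiv.ofBijective_apply, h2, Equiv.apply_symm_apply]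


section
variable {n : ℕ} {G : SimpleGraph (Fin n)} {K : Type} [Field K]

lemma det_phiM_expand (x : (cone G).edgeSet → K) :
    (phiM G K x).det = ∑ g : Fin n → (cone G).edgeSet,
      (∏ i, (x (g i) * (incf (g i).val (some i) : K)))
        * Matrix.det (Matrix.of fun i j : Fin n => (incf (g i).val (some j) : K)) := by
  have h1 : phiM G K x = fun i => ∑ e : (cone G).edgeSet,
      (x e * (incf e.val (some i) : K)) • (fun j => (incf e.val (some j) : K)) := by
    funext i j
    rw [phiM]
    rw [Finset.sum_apply]
    apply Finset.sum_congr rfl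
    intro e _
    simp [mul_assoc]
  show Matrix.detRowAlternating (phiM G K x) = _
  rw [h1, ← AlternatingMap.coe_multilinearMap]
  rw [(Matrix.detRowAlternating (R := K) (n := Fin n)).toMultilinearMap.map_sum
    (g := fun i e => (x e * (incf e.val (some i) : K)) • (fun j => (incf e.val (some j) : K)))]
  apply Finset.sum_congr rfl
  intro g _
  rw [MultilinearMap.map_smul_univ]
  rfl

lemma HS_edgeSet (S : Finset (cone G).edgeSet) :
    (HS S).edgeSet = (↑(S.image Subtype.val) : Set (Sym2 (Option (Fin n)))) := by
  rw [HS, SimpleGraph.edgeSet_fromEdgeSet]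
  ext e
  constructor
  · rintro ⟨he, _⟩; exact he
  · intro he
    refine ⟨he, ?_⟩
    rw [Finset.mem_coe, Finset.mem_image] at he
    obtain ⟨a, _, rfl⟩ := he
    exact (cone G).not_isDiag_of_mem_edgeSet a.2

lemma tree_card {S : Finset (cone G).edgeSet} (hT : (HS S).IsTree) : S.card = n := by
  have hcount := hT.card_edgeFinset
  have hfin : (HS S).edgeFinset = S.image Subtype.val := by
    rw [SimpleGraph.edgeFinset, Set.toFinset_congr (HS_edgeSet S), Finset.toFinset_coe]
  rw [hfin, Finset.card_image_of_injective _ Subtype.val_injective] at hcount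
  simpa using hcount

lemma det_phiM_grouped (x : (cone G).edgeSet → K) :
    (phiM G K x).det = ∑ S : Finset (cone G).edgeSet,
      (if (HS S).IsTree then ∏ e ∈ S, x e else 0) := by
  classical
  rw [det_phiM_expand]
  rw [← Finset.sum_fiberwise_of_maps_to
    (g := fun g : Fin n → (cone G).edgeSet => Finset.image g Finset.univ)
    (fun g _ => Finset.mem_univ _)]
  apply Finset.sum_congr rfl
  intro S _
  by_cases hcard : S.card = n
  · have eS : Fin n ≃ S := ((S.equivFin).trans (finCongr hcard)).symm
    set DK : Matrix (Fin n) (Fin n) K := Matrix.of (fun k j : Fin n =>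
      (incf ((eS k : (cone G).edgeSet) : Sym2 (Option (Fin n))) (some j) : K)) with hDK
    rw [fiber_sum S eS]
    have hterm : ∀ σ : Equiv.Perm (Fin n),
        (∏ i, (x ((eS (σ i) : (cone G).edgeSet))
            * (incf ((eS (σ i) : (cone G).edgeSet)).val (some i) : K)))
          * Matrix.det (Matrix.of fun i j : Fin n =>
              (incf ((eS (σ i) : (cone G).edgeSet)).val (some j) : K))
        = (∏ e ∈ S, x e) *
            ((((Equiv.Perm.sign σ : ℤ) : K) * ∏ i, DK (σ i) i) * DK.det) := by
      intro σ
      have hperm : Matrix.det (Matrix.of fun i j : Fin n =>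
          (incf ((eS (σ i) : (cone G).edgeSet)).val (some j) : K))
          = ((Equiv.Perm.sign σ : ℤ) : K) * DK.det := by
        have h := Matrix.det_permute σ DK
        have hmat : DK.submatrix σ id = Matrix.of fun i j : Fin n =>
            (incf ((eS (σ i) : (cone G).edgeSet)).val (some j) : K) := rfl
        rw [hmat] at h
        rw [h]
      rw [hperm, Finset.prod_mul_distrib]
      have hx : (∏ i, x ((eS (σ i) : (cone G).edgeSet))) = ∏ e ∈ S, x e := by
        rw [← Finset.prod_coe_sort S (fun e => x e)]
        exact Equiv.prod_comp (σ.trans eS) (fun s : S => x (s : (cone G).edgeSet))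
      have hinc : (∏ i, (incf ((eS (σ i) : (cone G).edgeSet)).val (some i) : K))
          = ∏ i, DK (σ i) i := rfl
      rw [hx, hinc]
      ring
    rw [Finset.sum_congr rfl (fun σ _ => hterm σ)]
    rw [← Finset.mul_sum, ← Finset.sum_mul, ← Matrix.det_apply']
    by_cases hT : (HS S).IsTree
    · rw [if_pos hT]
      have hZ : DK = (Matrix.of fun k j : Fin n =>
          incf ((eS k : (cone G).edgeSet) : Sym2 (Option (Fin n))) (some j)).map
            (Int.cast : ℤ → K) := rfl
      have hsq : DK.det * DK.det = 1 := by
        have h1 := tree_det_sq S eS hT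
        have hdk : DK.det = ((Matrix.of fun k j : Fin n =>
            incf ((eS k : (cone G).edgeSet) : Sym2 (Option (Fin n))) (some j)).det : ℤ) := by
          rw [hZ]
          rw [show ((Matrix.of fun k j : Fin n =>
            incf ((eS k : (cone G).edgeSet) : Sym2 (Option (Fin n))) (some j)).map
              (Int.cast : ℤ → K)) = (Int.castRingHom K).mapMatrix (Matrix.of fun k j : Fin n =>
            incf ((eS k : (cone G).edgeSet) : Sym2 (Option (Fin n))) (some j)) from rfl]
          rw [← RingHom.map_det]
          rfl
        rw [hdk, ← Int.cast_mul, ← pow_two, h1, Int.cast_one]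
      rw [hsq, mul_one]
    · rw [if_neg hT, nontree_det K S eS hT]
      ring
  · rw [if_neg (fun hT => hcard (tree_card hT))]
    apply Finset.sum_eq_zero
    intro g hg
    have himg : Finset.image g Finset.univ = S := (Finset.mem_filter.mp hg).2
    have hle : S.card ≤ n := by
      rw [← himg]
      exact le_trans (Finset.card_image_le) (by simp)
    have hlt : S.card < n := lt_of_le_of_ne hle hcard
    have hninj : ¬Function.Injective g := by
      intro hinj
      rw [← himg, Finset.card_image_of_injective _ hinj] at hlt
      simp at hlt
    rw [Function.not_injective_iff] at hninj
    obtain ⟨a, b, hab, hne⟩ := hninj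
    have hz : Matrix.det (Matrix.of fun i j : Fin n => (incf (g i).val (some j) : K)) = 0 := by
      apply Matrix.det_zero_of_row_eq hne
      funext j
      simp [hab]
    rw [hz, mul_zero]

lemma sum_trees (x : (cone G).edgeSet → K) :
    ∑ S : Finset (cone G).edgeSet, (if (HS S).IsTree then ∏ e ∈ S, x e else 0)
      = ∑ T ∈ Finset.univ.filter
          (fun T : SimpleGraph (Option (Fin n)) => T ≤ cone G ∧ T.IsTree),
          ∏ e ∈ Finset.univ.filter
            (fun e : (cone G).edgeSet => (e : Sym2 (Option (Fin n))) ∈ T.edgeSet), x e := by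
  classical
  rw [← Finset.sum_filter]
  have hST : ∀ T : SimpleGraph (Option (Fin n)), T ≤ cone G →
      HS (Finset.univ.filter
        (fun e : (cone G).edgeSet => (e : Sym2 (Option (Fin n))) ∈ T.edgeSet)) = T := by
    intro T hle
    rw [HS]
    have : (↑((Finset.univ.filter (fun e : (cone G).edgeSet =>
        (e : Sym2 (Option (Fin n))) ∈ T.edgeSet)).image Subtype.val)
          : Set (Sym2 (Option (Fin n)))) = T.edgeSet := by
      ext e
      simp only [Finset.mem_coe, Finset.mem_image, Finset.mem_filter, Finset.mem_univ, true_and]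
      constructor
      · rintro ⟨a, ha, rfl⟩; exact ha
      · intro he
        exact ⟨⟨e, SimpleGraph.edgeSet_mono hle he⟩, he, rfl⟩
    rw [this, SimpleGraph.fromEdgeSet_edgeSet]
  have hback : ∀ S : Finset (cone G).edgeSet,
      Finset.univ.filter
        (fun e : (cone G).edgeSet => (e : Sym2 (Option (Fin n))) ∈ (HS S).edgeSet) = S := by
    intro S
    ext e
    simp only [Finset.mem_filter, Finset.mem_univ, true_and, HS_edgeSet S,
      Finset.mem_coe, Finset.mem_image]
    constructor
    · rintro ⟨a, ha, hav⟩
      rwa [Subtype.val_injective hav] at ha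
    · intro he
      exact ⟨e, he, rfl⟩
  apply Finset.sum_nbij' (i := fun S => HS S)
    (j := fun T => Finset.univ.filter
      (fun e : (cone G).edgeSet => (e : Sym2 (Option (Fin n))) ∈ T.edgeSet))
  · intro S hS
    rw [Finset.mem_filter] at hS ⊢
    refine ⟨Finset.mem_univ _, ?_, hS.2⟩
    intro a b hab
    rw [HS, SimpleGraph.fromEdgeSet_adj] at hab
    obtain ⟨hmem, hne⟩ := hab
    rw [Finset.mem_coe, Finset.mem_image] at hmem
    obtain ⟨a', _, ha'⟩ := hmem
    rw [← SimpleGraph.mem_edgeSet, ← ha']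
    exact a'.2
  · intro T hT
    rw [Finset.mem_filter] at hT ⊢
    exact ⟨Finset.mem_univ _, by rw [hST T hT.2.1]; exact hT.2.2⟩
  · intro S hS
    exact hback S
  · intro T hT
    rw [Finset.mem_filter] at hT
    exact hST T hT.2.1
  · intro S hS
    rw [hback S]

lemma aeval_QG (x : (cone G).edgeSet → K) :
    (MvPolynomial.aeval x) (QG (cone G))
      = ∑ T ∈ Finset.univ.filter
          (fun T : SimpleGraph (Option (Fin n)) => T ≤ cone G ∧ T.IsTree),
          ∏ e ∈ Finset.univ.filter
            (fun e : (cone G).edgeSet => (e : Sym2 (Option (Fin n))) ∈ T.edgeSet), x e := by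
  rw [QG, map_sum]
  apply Finset.sum_congr rfl
  intro T _
  rw [map_prod]
  apply Finset.prod_congr rfl
  intro e _
  rw [MvPolynomial.aeval_X]

lemma det_phiM (x : (cone G).edgeSet → K) :
    (phiM G K x).det = (MvPolynomial.aeval x) (QG (cone G)) := by
  rw [det_phiM_grouped, sum_trees, aeval_QG]

lemma phiM_symm (x : (cone G).edgeSet → K) : (phiM G K x).IsSymm := by
  rw [Matrix.IsSymm]
  ext i j
  rw [Matrix.transpose_apply, phiM, phiM]
  apply Finset.sum_congr rfl
  intro e _
  ring

end

/-- For every simple graph `G` and every field `K`, there is a bijection between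
`{x ∈ K^{E(G*)} : Q_{G*}(x) ≠ 0}` and `Z^o_G(K)`. -/
theorem stmt_3 (n : ℕ) (G : SimpleGraph (Fin n)) (K : Type) [Field K] :
    Nonempty
      ({x : (cone G).edgeSet → K // (MvPolynomial.aeval x) (QG (cone G)) ≠ 0} ≃
        ZoG G K) := by
  classical
  set Φ : {x : (cone G).edgeSet → K // (MvPolynomial.aeval x) (QG (cone G)) ≠ 0} →
      ZoG G K := fun a => ⟨phiM G K a.1, by
        rw [ZoG, Set.mem_setOf_eq]
        refine ⟨by rw [det_phiM]; exact a.2, phiM_symm a.1, ?_⟩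
        intro i j hij hnadj
        exact phiM_offdiag_nonadj a.1 hij hnadj⟩ with hΦ
  refine ⟨Equiv.ofBijective Φ ⟨?_, ?_⟩⟩
  · -- injectivity
    rintro ⟨x₁, h₁⟩ ⟨x₂, h₂⟩ heq
    have hmat : phiM G K x₁ = phiM G K x₂ := congrArg Subtype.val heq
    apply Subtype.ext
    funext e
    obtain ⟨u, v, huv, he⟩ := edge_rep e
    have hx : ∀ (i : Fin n) (hmem : s(none, some i) ∈ (cone G).edgeSet),
        x₁ ⟨s(none, some i), hmem⟩ = x₂ ⟨s(none, some i), hmem⟩ := by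
      intro i hmem
      have h1 := phiM_rowsum (G := G) x₁ i
      have h2 := phiM_rowsum (G := G) x₂ i
      rw [hmat] at h1
      rw [h2] at h1
      exact h1.symm
    have hxs : ∀ (i j : Fin n) (hmem : s(some i, some j) ∈ (cone G).edgeSet),
        x₁ ⟨s(some i, some j), hmem⟩ = x₂ ⟨s(some i, some j), hmem⟩ := by
      intro i j hmem
      have hadj : G.Adj i j := (cone_adj_some G i j).mp ((SimpleGraph.mem_edgeSet _).mp hmem)
      have h1 := phiM_offdiag_adj (G := G) x₁ hadj
      have h2 := phiM_offdiag_adj (G := G) x₂ hadj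
      rw [hmat, h2] at h1
      have := neg_injective h1.symm
      convert this using 2
    match u, v, huv, he with
    | none, none, huv, he => exact absurd rfl huv
    | none, some i, huv, he =>
      have : e = ⟨s(none, some i), he ▸ e.2⟩ := Subtype.ext he
      rw [this]; exact hx i _
    | some i, none, huv, he =>
      have he' : (e : Sym2 (Option (Fin n))) = s(none, some i) := by rw [he, Sym2.eq_swap]
      have : e = ⟨s(none, some i), he' ▸ e.2⟩ := Subtype.ext he'
      rw [this]; exact hx i _
    | some i, some j, huv, he =>
      have : e = ⟨s(some i, some j), he ▸ e.2⟩ := Subtype.ext he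
      rw [this]; exact hxs i j _
  · -- surjectivity
    rintro ⟨M, hdet, hsymm, hsupp⟩
    have hMsymm : ∀ i j : Fin n, M j i = M i j := by
      intro i j
      have := congrFun (congrFun (congrArg (fun A => (A : Matrix (Fin n) (Fin n) K)) hsymm) i) j
      simpa [Matrix.transpose_apply] using this
    set f : Option (Fin n) → Option (Fin n) → K := fun a b =>
      match a, b with
      | none, none => 0
      | none, some i => ∑ j, M i j
      | some i, none => ∑ j, M i j
      | some i, some j => -M i j with hf
    have hcomm : ∀ a b, f a b = f b a := by
      intro a b
      match a, b with
      | none, none => rfl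
      | none, some i => rfl
      | some i, none => rfl
      | some i, some j => simp only [hf, neg_inj]; exact (hMsymm i j).symm
    set x : (cone G).edgeSet → K := fun e => Sym2.lift ⟨f, hcomm⟩ e.val with hxdef
    have hoff : ∀ i j : Fin n, i ≠ j → phiM G K x i j = M i j := by
      intro i j hij
      by_cases hadj : G.Adj i j
      · rw [phiM_offdiag_adj x hadj]
        show -(Sym2.lift ⟨f, hcomm⟩ s(some i, some j)) = M i j
        rw [Sym2.lift_mk]
        show -(-M i j) = M i j
        ring
      · rw [phiM_offdiag_nonadj x hij hadj, hsupp i j hij hadj]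
    have hMeq : phiM G K x = M := by
      ext i j
      by_cases hij : i = j
      · subst hij
        have hrow := phiM_rowsum (G := G) x i
        have hxval : x ⟨s(none, some i),
            (SimpleGraph.mem_edgeSet _).mpr (cone_adj_none G i)⟩ = ∑ j, M i j := by
          show Sym2.lift ⟨f, hcomm⟩ s(none, some i) = ∑ j, M i j
          rw [Sym2.lift_mk]
        rw [hxval] at hrow
        have hsplit1 : ∑ j ∈ Finset.univ.erase i, phiM G K x i j + phiM G K x i i
            = ∑ j, phiM G K x i j := Finset.sum_erase_add _ _ (Finset.mem_univ i)
        have hsplit2 : ∑ j ∈ Finset.univ.erase i, M i j + M i i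
            = ∑ j, M i j := Finset.sum_erase_add _ _ (Finset.mem_univ i)
        have herase : ∑ j ∈ Finset.univ.erase i, phiM G K x i j
            = ∑ j ∈ Finset.univ.erase i, M i j := by
          apply Finset.sum_congr rfl
          intro j hj
          exact hoff i j (Ne.symm (Finset.ne_of_mem_erase hj))
        have : ∑ j ∈ Finset.univ.erase i, M i j + phiM G K x i i = ∑ j, M i j := by
          rw [← herase, hsplit1, hrow]
        exact add_left_cancel (this.trans hsplit2.symm)
      · exact hoff i j hij
    refine ⟨⟨x, ?_⟩, ?_⟩
    · rw [← det_phiM, hMeq]; exact hdet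
    · apply Subtype.ext
      show phiM G K x = M
      exact hMeq
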